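/- Let P ∈ ℤ[X] be a nonconstant polynomial with no roots on the complex unit circle |z| = 1, and let B > 0 be a real number. Then the set Rem(P, B) of all polynomials R ∈ ℤ[X] with deg R < deg P such that for every complex root α of P of multiplicity e and every k ∈ {0,1,...,e-1} one has |R^{(k)}(α)| ≤ k! · B / | |α| - 1 |^{k+1}, is a finite set. -/

import Mathlib

open Polynomial

/-- `Rem P B`: the set of integer polynomials `R` with `deg R < deg P` such that
for every complex root `α` of `P` of multiplicity `e` and every `k < e` one has
`|R^{(k)}(α)| ≤ k! · B / ||α| - 1|^{k+1}`. -/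
lemma key_zero (Pc : Polynomial ℂ) (hPc : Pc ≠ 0) (Q : Polynomial ℂ)
    (hdeg : Q.degree < Pc.degree)
    (h : ∀ α : ℂ, Pc.IsRoot α → ∀ k < Pc.rootMultiplicity α,
      ((⇑derivative)^[k] Q).eval α = 0) : Q = 0 := by
  by_contra hQ
  have hle : Pc.roots ≤ Q.roots := by
    rw [Multiset.le_iff_count]
    intro α
    rw [count_roots, count_roots]
    rcases Nat.eq_zero_or_pos (Pc.rootMultiplicity α) with h0 | hpos
    · simp [h0]
    have hroot : Pc.IsRoot α := (rootMultiplicity_pos hPc).mp hpos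
    have := lt_rootMultiplicity_of_isRoot_iterate_derivative_of_mem_nonZeroDivisors'
      (p := Q) (t := α) (n := Pc.rootMultiplicity α - 1) hQ
      (fun m hm => h α hroot m (lt_of_le_of_lt hm (Nat.sub_lt hpos one_pos)))
      (fun m _ hm => mem_nonZeroDivisors_of_ne_zero (by exact_mod_cast hm))
    omega
  have h1 : Pc.roots.card = Pc.natDegree :=
    splits_iff_card_roots.mp (IsAlgClosed.splits Pc)
  have h2 : Q.roots.card ≤ Q.natDegree := card_roots' Q
  have h3 : Q.natDegree < Pc.natDegree := natDegree_lt_natDegree hQ hdeg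
  have := Multiset.card_le_card hle
  omega

/-- Linear map rebuilding a polynomial from a coefficient vector. -/
noncomputable def toP (n : ℕ) : (Fin n → ℂ) →ₗ[ℂ] Polynomial ℂ where
  toFun v := ∑ i : Fin n, C (v i) * X ^ (i : ℕ)
  map_add' v w := by simp [add_mul, Finset.sum_add_distrib]
  map_smul' c v := by
    simp only [Pi.smul_apply, RingHom.id_apply, Finset.smul_sum]
    exact Finset.sum_congr rfl fun i _ => by
      rw [Polynomial.smul_eq_C_mul, smul_eq_mul, ← mul_assoc, C_mul]

lemma toP_apply (n : ℕ) (v : Fin n → ℂ) :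
    toP n v = ∑ i : Fin n, C (v i) * X ^ (i : ℕ) := rfl

lemma toP_coeff (n : ℕ) (v : Fin n → ℂ) (j : Fin n) : (toP n v).coeff j = v j := by
  have : (toP n v).coeff j = ∑ i : Fin n, v i * (if (j:ℕ) = (i:ℕ) then 1 else 0) := by
    rw [toP_apply]
    simp [finset_sum_coeff, coeff_C_mul, coeff_X_pow]
  rw [this, Fintype.sum_eq_single j (fun i hi => by
    simp [(by simpa [eq_comm, Fin.ext_iff] using hi : ¬(j:ℕ) = (i:ℕ))])]
  simp

lemma toP_degree_lt (n : ℕ) (v : Fin n → ℂ) : (toP n v).degree < n := by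
  rw [toP_apply]
  refine lt_of_le_of_lt (degree_sum_le _ _) ?_
  rw [Finset.sup_lt_iff (by exact_mod_cast WithBot.bot_lt_coe n)]
  intro i _
  exact lt_of_le_of_lt (degree_C_mul_X_pow_le _ _) (by exact_mod_cast i.isLt)

lemma toP_map (n : ℕ) (R : Polynomial ℤ) (hR : R.natDegree < n) :
    toP n (fun i => (R.coeff i : ℂ)) = R.map (Int.castRingHom ℂ) := by
  have hR' : (R.map (Int.castRingHom ℂ)).natDegree < n :=
    lt_of_le_of_lt (natDegree_map_le) hR
  conv_rhs => rw [as_sum_range' _ n hR']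
  rw [Finset.sum_range fun i => monomial i ((R.map (Int.castRingHom ℂ)).coeff i)]
  rw [toP_apply]
  refine Finset.sum_congr rfl fun i _ => ?_
  rw [C_mul_X_pow_eq_monomial, coeff_map]
  rfl

def Rem (P : Polynomial ℤ) (B : ℝ) : Set (Polynomial ℤ) :=
  {R | R.degree < P.degree ∧
    ∀ α : ℂ, (P.map (Int.castRingHom ℂ)).IsRoot α →
      ∀ k < (P.map (Int.castRingHom ℂ)).rootMultiplicity α,
        ‖(((⇑Polynomial.derivative)^[k] (R.map (Int.castRingHom ℂ))).eval α)‖ ≤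
          (k.factorial : ℝ) * B / |‖α‖ - 1| ^ (k + 1)}

/-- For a nonconstant integer polynomial `P` with no roots on the unit circle
and any real `B > 0`, the set `Rem P B` is finite. -/
theorem rem_finite (P : Polynomial ℤ) (hP : 0 < P.natDegree)
    (hcirc : ∀ z : ℂ, ‖z‖ = 1 → (Polynomial.aeval z) P ≠ 0)
    (B : ℝ) (hB : 0 < B) :
    (Rem P B).Finite := by
  classical
  set n := P.natDegree with hn
  set Pc := P.map (Int.castRingHom ℂ) with hPcdef
  have hPne : P ≠ 0 := fun h => by rw [hn, h, natDegree_zero] at hP; exact lt_irrefl 0 hP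
  have hPcne : Pc ≠ 0 := by
    rw [hPcdef, Polynomial.map_ne_zero_iff (fun a b h => by simpa using h)]
    exact hPne
  have hnn : Pc.natDegree = n := natDegree_map_eq_of_injective
    (fun a b h => by simpa using h) P
  have hdegPc : Pc.degree = (n : ℕ) := by
    rw [degree_eq_natDegree hPcne, hnn]
  -- multiplicities are < n+… bounded by natDegree
  have hmult_le : ∀ α : ℂ, Pc.rootMultiplicity α ≤ n := by
    intro α
    rcases Nat.eq_zero_or_pos (Pc.rootMultiplicity α) with h0 | hpos
    · omega
    have h1 : Pc.rootMultiplicity α = Pc.roots.count α := (count_roots Pc).symm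
    have := Multiset.count_le_card α Pc.roots
    have h2 : Pc.roots.card ≤ Pc.natDegree := card_roots' Pc
    omega
  set S := Pc.roots.toFinset with hS
  -- the linear map
  set L : (Fin n → ℂ) →ₗ[ℂ] (S → Fin n → ℂ) :=
    LinearMap.pi fun α => LinearMap.pi fun k =>
      if (k : ℕ) < Pc.rootMultiplicity (α : ℂ) then
        (leval (α : ℂ)).comp
          (((derivative : Polynomial ℂ →ₗ[ℂ] Polynomial ℂ) ^ (k : ℕ)).comp (toP n))
      else 0 with hL
  have hLpos : ∀ (v : Fin n → ℂ) (α : S) (k : Fin n), (k : ℕ) < Pc.rootMultiplicity (α : ℂ) →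
      L v α k = ((⇑derivative)^[(k : ℕ)] (toP n v)).eval (α : ℂ) := by
    intro v α k hk
    rw [hL]
    simp only [LinearMap.pi_apply, if_pos hk, LinearMap.comp_apply, leval_apply,
      Module.End.pow_apply]
  have hLneg : ∀ (v : Fin n → ℂ) (α : S) (k : Fin n), ¬ (k : ℕ) < Pc.rootMultiplicity (α : ℂ) →
      L v α k = 0 := by
    intro v α k hk
    rw [hL]
    simp only [LinearMap.pi_apply, if_neg hk, LinearMap.zero_apply]
  have hinj : Function.Injective L := by
    rw [← LinearMap.ker_eq_bot]
    rw [LinearMap.ker_eq_bot']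
    intro v hv
    have hQ : toP n v = 0 := by
      refine key_zero Pc hPcne _ (by rw [hdegPc]; exact toP_degree_lt n v) ?_
      intro α hα k hk
      have hαS : α ∈ S := by
        rw [hS, Multiset.mem_toFinset, mem_roots hPcne]
        exact hα
      have hkn : k < n := lt_of_lt_of_le hk (hmult_le α)
      have := congrFun (congrFun hv ⟨α, hαS⟩) ⟨k, hkn⟩
      rw [hLpos v ⟨α, hαS⟩ ⟨k, hkn⟩ hk] at this
      exact this
    funext j
    rw [← toP_coeff n v j, hQ]
    simp
  -- finite-dimensional antilipschitz bound
  set e := (LinearEquiv.ofInjective L hinj).toContinuousLinearEquiv with he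
  set C : ℝ := ‖(e.symm : LinearMap.range L →L[ℂ] (Fin n → ℂ))‖ with hC
  have hbound : ∀ v : Fin n → ℂ, ‖v‖ ≤ C * ‖L v‖ := by
    intro v
    have h1 : v = e.symm (e v) := by simp
    have h2 : ‖(e v : S → Fin n → ℂ)‖ = ‖L v‖ := by
      rw [he]
      exact congrArg norm (LinearEquiv.ofInjective_apply (h := hinj) L v)
    calc ‖v‖ = ‖e.symm (e v)‖ := by rw [← h1]
      _ ≤ C * ‖e v‖ := (e.symm : LinearMap.range L →L[ℂ] (Fin n → ℂ)).le_opNorm _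
      _ = C * ‖L v‖ := by rw [← h2]; rfl
  -- now the boundedness argument
  set g : ℂ → ℕ → ℝ := fun α k => (k.factorial : ℝ) * B / |‖α‖ - 1| ^ (k + 1) with hg
  set M : ℝ := ∑ α : {x // x ∈ S}, ∑ k : Fin n, max 0 (g (α : ℂ) (k : ℕ)) with hM
  have hM0 : 0 ≤ M :=
    Finset.sum_nonneg fun _ _ => Finset.sum_nonneg fun _ _ => le_max_left 0 _
  have hterm : ∀ (α : {x // x ∈ S}) (k : Fin n), max 0 (g (α : ℂ) (k : ℕ)) ≤ M := by
    intro α k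
    calc max 0 (g (α : ℂ) (k : ℕ)) ≤ ∑ k' : Fin n, max 0 (g (α : ℂ) (k' : ℕ)) :=
          Finset.single_le_sum (f := fun k' : Fin n => max 0 (g (α : ℂ) (k' : ℕ)))
            (fun _ _ => le_max_left 0 _) (Finset.mem_univ k)
      _ ≤ M := Finset.single_le_sum
            (f := fun α' : {x // x ∈ S} => ∑ k' : Fin n, max 0 (g (α' : ℂ) (k' : ℕ)))
            (fun _ _ => Finset.sum_nonneg fun _ _ => le_max_left 0 _) (Finset.mem_univ α)
  set N : ℤ := ⌈C * M⌉ with hNdef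
  have hfin : ((Set.univ : Set (Fin n)).pi fun _ =>
      ((Finset.Icc (-N) N : Finset ℤ) : Set ℤ)).Finite :=
    Set.Finite.pi fun _ => (Finset.Icc (-N) N).finite_toSet
  refine Set.Finite.subset
    (hfin.image fun f : Fin n → ℤ => ∑ i : Fin n, Polynomial.C (f i) * X ^ (i : ℕ)) ?_
  rintro R ⟨hRdeg, hRb⟩
  have hRn : R.natDegree < n := by
    rcases eq_or_ne R 0 with rfl | hR0
    · simpa using hP
    · rw [hn]; exact natDegree_lt_natDegree hR0 hRdeg
  set v : Fin n → ℂ := fun i => ((R.coeff i : ℤ) : ℂ) with hv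
  have hvP : toP n v = R.map (Int.castRingHom ℂ) := toP_map n R hRn
  have hLb : ‖L v‖ ≤ M := by
    rw [pi_norm_le_iff_of_nonneg hM0]
    intro α
    rw [pi_norm_le_iff_of_nonneg hM0]
    intro k
    by_cases hk : (k : ℕ) < Pc.rootMultiplicity (α : ℂ)
    · rw [hLpos v α k hk, hvP]
      have hroot : Pc.IsRoot (α : ℂ) :=
        (mem_roots hPcne).mp (Multiset.mem_toFinset.mp α.2)
      have hb := hRb (α : ℂ) hroot (k : ℕ) hk
      calc ‖((⇑derivative)^[(k : ℕ)] (R.map (Int.castRingHom ℂ))).eval (α : ℂ)‖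
          = ‖(((⇑derivative)^[(k : ℕ)] (R.map (Int.castRingHom ℂ))).eval (α : ℂ))‖ :=
            rfl
        _ ≤ g (α : ℂ) (k : ℕ) := hb
        _ ≤ max 0 (g (α : ℂ) (k : ℕ)) := le_max_right _ _
        _ ≤ M := hterm α k
    · rw [hLneg v α k hk]
      simpa using hM0
  have hC0 : (0:ℝ) ≤ C := by
    rw [hC]
    exact norm_nonneg ((e.symm : LinearMap.range L →L[ℂ] (Fin n → ℂ)))
  have hnv : ‖v‖ ≤ C * M :=
    le_trans (hbound v) (mul_le_mul_of_nonneg_left hLb hC0)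
  refine ⟨fun i => R.coeff i, ?_, ?_⟩
  · intro i _
    simp only [Finset.coe_Icc, Set.mem_Icc, ← abs_le]
    have h1 : ‖v i‖ ≤ C * M := le_trans (norm_le_pi_norm v i) hnv
    have h2 : ((|R.coeff i| : ℤ) : ℝ) ≤ C * M := by
      rw [hv] at h1
      simpa using h1
    have h3 : ((|R.coeff i| : ℤ) : ℝ) ≤ (N : ℝ) := h2.trans (Int.le_ceil _)
    exact_mod_cast h3
  · show (∑ i : Fin n, Polynomial.C (R.coeff i) * X ^ (i : ℕ)) = R
    conv_rhs => rw [as_sum_range' R n hRn]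
    rw [← Finset.sum_range (fun i => Polynomial.C (R.coeff i) * X ^ i)]
    exact Finset.sum_congr rfl fun i _ => C_mul_X_pow_eq_monomial
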